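/- Let K be an Eberlein compactum of weight 𝔠, realized as a weakly compact subset of c₀(𝔠). Then there exist pairs of distinct points x_α, y_α ∈ K for α < 𝔠 such that, setting σ_α = (1/2)(δ_{x_α} − δ_{y_α}) ∈ M₁(K), the set Σ = {σ_α : α < 𝔠} ∪ {−σ_α : α < 𝔠} ∪ {0} with the weak* topology is homeomorphic to the one-point compactification 𝔸(𝔠) of a discrete set of cardinality 𝔠, with 0 as the point at infinity. -/

import Mathlib

open ZeroAtInftyContinuousMap

set_option linter.unusedSectionVars false
set_option maxHeartbeats 1000000

/-- The weight of a topological space: the least cardinality of a topological basis. -/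
noncomputable def topWeight (X : Type*) [TopologicalSpace X] : Cardinal :=
  sInf {c : Cardinal | ∃ B : Set (Set X),
    TopologicalSpace.IsTopologicalBasis B ∧ Cardinal.mk B = c}

section Stmt9Aux

open Filter Topology Set Cardinal TopologicalSpace

variable {Γ : Type} [TopologicalSpace Γ] [DiscreteTopology Γ]

private noncomputable def s9evalC (β : Γ) : ZeroAtInftyContinuousMap Γ ℝ →L[ℝ] ℝ :=
  LinearMap.mkContinuous
    { toFun := fun f => f β
      map_add' := fun f g => rfl
      map_smul' := fun c f => rfl } 1 (fun f => by
        rw [one_mul, ← norm_toBCF_eq_norm]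
        exact f.toBCF.norm_coe_le_norm β)

private lemma s9evalC_cont (β : Γ) :
    Continuous fun z : WeakSpace ℝ (ZeroAtInftyContinuousMap Γ ℝ) =>
      s9evalC β ((toWeakSpace ℝ (ZeroAtInftyContinuousMap Γ ℝ)).symm z) :=
  WeakBilin.eval_continuous ((topDualPairing ℝ (ZeroAtInftyContinuousMap Γ ℝ)).flip) (s9evalC β)

variable (K : Set (WeakSpace ℝ (ZeroAtInftyContinuousMap Γ ℝ)))

/-- value of a point of `K` at a coordinate -/
private noncomputable def s9v (z : K) (β : Γ) : ℝ :=
  ((toWeakSpace ℝ (ZeroAtInftyContinuousMap Γ ℝ)).symm z.1) β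

private lemma s9v_cont (β : Γ) : Continuous fun z : K => s9v K z β :=
  (s9evalC_cont β).comp continuous_subtype_val

/-- the coordinate function as a continuous map on `K` -/
private noncomputable def s9coord (β : Γ) : C(K, ℝ) := ⟨fun z => s9v K z β, s9v_cont K β⟩

private lemma s9v_inj {z w : K} (h : ∀ β, s9v K z β = s9v K w β) : z = w := by
  apply Subtype.ext
  have : (toWeakSpace ℝ (ZeroAtInftyContinuousMap Γ ℝ)).symm z.1
      = (toWeakSpace ℝ (ZeroAtInftyContinuousMap Γ ℝ)).symm w.1 :=
    DFunLike.ext _ _ h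
  exact (toWeakSpace ℝ (ZeroAtInftyContinuousMap Γ ℝ)).symm.injective this

/-- countability of supports -/
private lemma s9supp_countable (z : K) : {β : Γ | s9v K z β ≠ 0}.Countable := by
  set f := (toWeakSpace ℝ (ZeroAtInftyContinuousMap Γ ℝ)).symm z.1
  have hf : Tendsto f (cocompact Γ) (nhds 0) := zero_at_infty f
  have hsub : {β : Γ | s9v K z β ≠ 0} ⊆ ⋃ n : ℕ, {β : Γ | 1 / (n + 1 : ℝ) ≤ |f β|} := by
    intro β hβ
    have : (0:ℝ) < |f β| := abs_pos.mpr hβ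
    obtain ⟨n, hn⟩ := exists_nat_one_div_lt this
    exact Set.mem_iUnion.mpr ⟨n, le_of_lt hn⟩
  refine Set.Countable.mono hsub (Set.countable_iUnion fun n => Set.Finite.countable ?_)
  have hpos : (0:ℝ) < 1 / (n + 1 : ℝ) := by positivity
  have hev : ∀ᶠ β in cocompact Γ, dist (f β) 0 < 1 / (n + 1 : ℝ) :=
    Metric.tendsto_nhds.mp hf _ hpos
  obtain ⟨t, ht, hts⟩ := mem_cocompact.mp hev
  refine Set.Finite.subset (ht.finite ?_) ?_
  · exact DiscreteTopology.isDiscrete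
  · intro β hβ
    by_contra hb
    have := hts hb
    simp only [Set.mem_setOf_eq, Real.dist_eq, sub_zero] at this
    exact absurd hβ (not_le.mpr this)

end Stmt9Aux
section Stmt9B

open Filter Topology Set Cardinal TopologicalSpace

variable {Γ : Type} [TopologicalSpace Γ] [DiscreteTopology Γ]
variable (K : Set (WeakSpace ℝ (ZeroAtInftyContinuousMap Γ ℝ))) [CompactSpace K]

/-- If the restriction to a small set of coordinates were injective, the weight would be small. -/
private lemma s9exists_pair (hweight : topWeight K = Cardinal.continuum)
    (W : Set Γ) (hW : #W < Cardinal.continuum) :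
    ∃ z w : K, z ≠ w ∧ ∀ β ∈ W, s9v K z β = s9v K w β := by
  by_contra hcon
  push_neg at hcon
  -- the restriction map is injective
  set j : K → (W → ℝ) := fun z β => s9v K z β.1 with hj
  have hjinj : Function.Injective j := by
    intro z w h
    by_contra hzw
    obtain ⟨β, hβW, hβ⟩ := hcon z w hzw
    exact hβ (congrFun h ⟨β, hβW⟩)
  have hjcont : Continuous j := continuous_pi fun β => s9v_cont K β.1
  have hemb : Topology.IsClosedEmbedding j := hjcont.isClosedEmbedding hjinj
  -- a countable basis of ℝ
  obtain ⟨b, hbc, -, hb⟩ := TopologicalSpace.exists_countable_basis ℝ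
  have hbne : b.Nonempty := by
    obtain ⟨v, hvb, -, -⟩ := hb.exists_subset_of_mem_open (Set.mem_univ (0:ℝ)) isOpen_univ
    exact ⟨v, hvb⟩
  obtain ⟨fc, hfc⟩ := hbc.exists_eq_range hbne
  have hfcopen : ∀ n, IsOpen (fc n) := fun n => hb.isOpen (hfc ▸ Set.mem_range_self n)
  -- basic open sets in the product indexed by finite sets
  classical
  set G : Finset (↥W × ℕ) → Set (W → ℝ) :=
    fun t => ⋂ p ∈ t, (fun g : W → ℝ => g p.1) ⁻¹' fc p.2 with hG
  have hGopen : ∀ t, IsOpen (G t) := fun t =>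
    isOpen_biInter_finset fun p _ => (hfcopen p.2).preimage (continuous_apply p.1)
  set B : Set (Set K) := Set.range (fun t => j ⁻¹' G t) with hB
  have hbasis : TopologicalSpace.IsTopologicalBasis B := by
    apply TopologicalSpace.isTopologicalBasis_of_isOpen_of_nhds
    · rintro u ⟨t, rfl⟩
      exact (hGopen t).preimage hjcont
    · intro a u hau hu
      obtain ⟨U, hUopen, hUeq⟩ := hemb.isInducing.isOpen_iff.mp hu
      have haU : j a ∈ U := by rw [← hUeq] at hau; exact hau
      obtain ⟨I, us, hus, hpi⟩ := isOpen_pi_iff.mp hUopen (j a) haU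
      -- choose basis elements inside each us i
      have hch : ∀ i : ↥W, i ∈ I → ∃ n : ℕ, j a i ∈ fc n ∧ fc n ⊆ us i := by
        intro i hi
        obtain ⟨v, hvb, hav, hvsub⟩ :=
          hb.exists_subset_of_mem_open (hus i hi).2 (hus i hi).1
        obtain ⟨n, rfl⟩ := by rw [hfc] at hvb; exact hvb
        exact ⟨n, hav, hvsub⟩
      choose nn hnn1 hnn2 using hch
      set t : Finset (↥W × ℕ) := I.attach.image (fun i => (i.1, nn i.1 i.2)) with ht
      refine ⟨j ⁻¹' G t, ⟨t, rfl⟩, ?_, ?_⟩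
      · simp only [Set.mem_preimage, hG, Set.mem_iInter]
        rintro p hp
        simp only [ht, Finset.mem_image, Finset.mem_attach] at hp
        obtain ⟨i, -, rfl⟩ := hp
        exact hnn1 i.1 i.2
      · intro z hz
        rw [← hUeq]
        apply hpi
        intro i hi
        have : (i, nn i hi) ∈ t := by
          simp only [ht, Finset.mem_image, Finset.mem_attach]
          exact ⟨⟨i, hi⟩, by simp⟩
        have hzi := (Set.mem_iInter₂.mp hz) (i, nn i hi) this
        exact hnn2 i hi hzi
  -- cardinality of the basis
  have hcard : #B ≤ Cardinal.mk (Finset (↥W × ℕ)) := Cardinal.mk_range_le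
  have hfin : #(Finset (↥W × ℕ)) < Cardinal.continuum := by
    have h1 : #(Finset (↥W × ℕ)) ≤ #(List (↥W × ℕ)) :=
      Cardinal.mk_le_of_injective (f := fun s => s.toList) (fun s t h => by
        simpa using congrArg List.toFinset h)
    have h2 : #(List (↥W × ℕ)) ≤ max ℵ₀ #(↥W × ℕ) := Cardinal.mk_list_le_max _
    have h3 : #(↥W × ℕ) < Cardinal.continuum := by
      rw [Cardinal.mk_prod, Cardinal.lift_id, Cardinal.lift_id, Cardinal.mk_nat]
      exact Cardinal.mul_lt_of_lt Cardinal.aleph0_lt_continuum.le hW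
        Cardinal.aleph0_lt_continuum
    calc #(Finset (↥W × ℕ)) ≤ max ℵ₀ #(↥W × ℕ) := h1.trans h2
      _ < Cardinal.continuum := max_lt Cardinal.aleph0_lt_continuum h3
  have : topWeight K ≤ #B := csInf_le' ⟨B, hbasis, rfl⟩
  rw [hweight] at this
  exact absurd (this.trans_lt (hcard.trans_lt hfin)) (lt_irrefl _)

end Stmt9B
section Stmt9C

open Filter Topology Set Cardinal TopologicalSpace

variable {Γ : Type} [TopologicalSpace Γ] [DiscreteTopology Γ]
variable (K : Set (WeakSpace ℝ (ZeroAtInftyContinuousMap Γ ℝ))) [CompactSpace K]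

private def s9supp (p : K × K) : Set Γ := {β | s9v K p.1 β ≠ s9v K p.2 β}

private def s9good : Set (Set (K × K)) :=
  {F | (∀ p ∈ F, p.1 ≠ p.2) ∧
    ∀ p ∈ F, ∀ q ∈ F, p ≠ q → Disjoint (s9supp K p) (s9supp K q)}

private lemma s9family (hΓ : Cardinal.mk Γ = Cardinal.continuum)
    (hweight : topWeight K = Cardinal.continuum) :
    ∃ P : Γ → K × K, (∀ a, (P a).1 ≠ (P a).2) ∧ Function.Injective P ∧
      ∀ a b, a ≠ b → Disjoint (s9supp K (P a)) (s9supp K (P b)) := by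
  -- Zorn's lemma: a maximal family of pairs with pairwise disjoint difference supports
  obtain ⟨M, hM⟩ := zorn_subset (s9good K) (by
    intro c hcS hchain
    refine ⟨⋃₀ c, ⟨?_, ?_⟩, fun s hs => Set.subset_sUnion_of_mem hs⟩
    · rintro p ⟨F, hFc, hpF⟩
      exact (hcS hFc).1 p hpF
    · rintro p ⟨F, hFc, hpF⟩ q ⟨G, hGc, hqG⟩ hpq
      rcases hchain.total hFc hGc with h | h
      · exact (hcS hGc).2 p (h hpF) q hqG hpq
      · exact (hcS hFc).2 p hpF q (h hqG) hpq)
  have hMS : M ∈ s9good K := hM.prop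
  -- M has size at least continuum
  have hMbig : Cardinal.continuum ≤ #M := by
    by_contra hlt
    push_neg at hlt
    set W : Set Γ := ⋃ p : M, s9supp K p.1 with hW
    have hWcard : #W < Cardinal.continuum := by
      have h1 : #W ≤ #M * ⨆ p : M, #(s9supp K p.1) := Cardinal.mk_iUnion_le _
      have h2 : (⨆ p : M, #(s9supp K p.1)) ≤ ℵ₀ := by
        apply ciSup_le'
        intro p
        apply Cardinal.le_aleph0_iff_set_countable.mpr
        have : s9supp K p.1 ⊆ {β | s9v K p.1.1 β ≠ 0} ∪ {β | s9v K p.1.2 β ≠ 0} := by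
          intro β hβ
          by_contra hb
          simp only [Set.mem_union, Set.mem_setOf_eq, not_or, not_not] at hb
          exact hβ (hb.1.trans hb.2.symm)
        exact Set.Countable.mono this
          ((s9supp_countable K p.1.1).union (s9supp_countable K p.1.2))
      have h3 : #M * ⨆ p : M, #(s9supp K p.1) ≤ #M * ℵ₀ := mul_le_mul_right h2 _
      exact (h1.trans h3).trans_lt
        (Cardinal.mul_lt_of_lt Cardinal.aleph0_lt_continuum.le hlt
          Cardinal.aleph0_lt_continuum)
    obtain ⟨z, w, hzw, heq⟩ := s9exists_pair K hweight W hWcard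
    -- the new pair has nonempty support disjoint from W
    have hsuppW : Disjoint (s9supp K (z, w)) W := by
      rw [Set.disjoint_left]
      intro β hβ hβW
      exact hβ (heq β hβW)
    have hsne : (s9supp K (z, w)).Nonempty := by
      by_contra hb
      push_neg at hb
      apply hzw
      apply s9v_inj K
      intro β
      by_contra hne
      have hmem : β ∈ s9supp K (z, w) := hne
      rw [hb] at hmem
      exact hmem
    have hnew : insert ((z, w) : K × K) M ∈ s9good K := by
      constructor
      · rintro p (rfl | hpM)
        · exact hzw
        · exact hMS.1 p hpM
      · have hd : ∀ q ∈ M, Disjoint (s9supp K (z, w)) (s9supp K q) := by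
          intro q hqM
          refine hsuppW.mono_right ?_
          exact Set.subset_iUnion (fun p : M => s9supp K p.1) ⟨q, hqM⟩
        rintro p (rfl | hpM) q (rfl | hqM) hpq
        · exact absurd rfl hpq
        · exact hd q hqM
        · exact (hd p hpM).symm
        · exact hMS.2 p hpM q hqM hpq
    have hMM : (z, w) ∈ M := by
      have := hM.2 hnew (Set.subset_insert _ _)
      exact this (Set.mem_insert _ _)
    obtain ⟨β, hβ⟩ := hsne
    exact Set.disjoint_left.mp hsuppW hβ
      (Set.mem_iUnion.mpr ⟨⟨(z, w), hMM⟩, hβ⟩)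
  -- extract an injective family indexed by Γ
  have : #Γ ≤ #M := by rw [hΓ]; exact hMbig
  obtain ⟨ι⟩ := (Cardinal.le_def _ _).mp this
  refine ⟨fun a => (ι a : K × K), fun a => hMS.1 _ (ι a).2, ?_, ?_⟩
  · intro a b hab
    exact ι.injective (Subtype.ext hab)
  · intro a b hab
    refine hMS.2 _ (ι a).2 _ (ι b).2 ?_
    intro h
    exact hab (ι.injective (Subtype.ext h))

end Stmt9C
section Stmt9D

open Filter Topology Set Cardinal TopologicalSpace

variable {Γ : Type} [TopologicalSpace Γ] [DiscreteTopology Γ]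
variable (K : Set (WeakSpace ℝ (ZeroAtInftyContinuousMap Γ ℝ))) [CompactSpace K]

private lemma s9main {P : Γ → K × K} (hinj : Function.Injective P)
    (hdisj : ∀ a b, a ≠ b → Disjoint (s9supp K (P a)) (s9supp K (P b)))
    (f : C(K, ℝ)) {δ : ℝ} (hδ : 0 < δ) :
    {a : Γ | δ ≤ |f (P a).1 - f (P a).2|}.Finite := by
  by_contra hinf
  rw [← Set.not_infinite, not_not] at hinf
  set em := hinf.natEmbedding with hem
  set q : ℕ → K × K := fun n => P (em n).1 with hq
  set C : Set (K × K) := {w | δ ≤ |f w.1 - f w.2|} with hC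
  have hCclosed : IsClosed C := by
    have hcont : Continuous fun w : K × K => |f w.1 - f w.2| :=
      ((f.continuous.comp continuous_fst).sub (f.continuous.comp continuous_snd)).abs
    exact isClosed_le continuous_const hcont
  have hCcomp : IsCompact C := hCclosed.isCompact
  have hqC : ∀ n, q n ∈ C := fun n => (em n).2
  have hle : Filter.map q Filter.atTop ≤ Filter.principal C :=
    Filter.le_principal_iff.mpr (Filter.eventually_atTop.mpr ⟨0, fun n _ => hqC n⟩)
  obtain ⟨z, hzC, hcl⟩ := hCcomp.exists_clusterPt hle
  -- the cluster point is off the diagonal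
  have hzne : z.1 ≠ z.2 := by
    intro h
    rw [hC, Set.mem_setOf_eq, h, sub_self, abs_zero] at hzC
    exact absurd hzC (not_le.mpr hδ)
  obtain ⟨β, hβ⟩ : ∃ β, s9v K z.1 β ≠ s9v K z.2 β := by
    by_contra hb
    push_neg at hb
    exact hzne (s9v_inj K hb)
  set r : ℝ := |s9v K z.1 β - s9v K z.2 β| with hr
  have hrpos : 0 < r := abs_pos.mpr (sub_ne_zero.mpr hβ)
  set V : Set (K × K) :=
    {w | |s9v K w.1 β - s9v K z.1 β| < r/3 ∧ |s9v K w.2 β - s9v K z.2 β| < r/3} with hV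
  have hVopen : IsOpen V := by
    have c1 : Continuous fun w : K × K => |s9v K w.1 β - s9v K z.1 β| :=
      (((s9v_cont K β).comp continuous_fst).sub continuous_const).abs
    have c2 : Continuous fun w : K × K => |s9v K w.2 β - s9v K z.2 β| :=
      (((s9v_cont K β).comp continuous_snd).sub continuous_const).abs
    exact (isOpen_lt c1 continuous_const).inter (isOpen_lt c2 continuous_const)
  have hzV : z ∈ V := by
    constructor <;> simp [sub_self, abs_zero] <;> positivity
  have hVnhds : V ∈ nhds z := hVopen.mem_nhds hzV
  -- pairs in V have β in their support
  have hVsupp : ∀ w ∈ V, β ∈ s9supp K w := by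
    rintro w ⟨h1, h2⟩
    simp only [s9supp, Set.mem_setOf_eq]
    intro heq
    have key : r ≤ |s9v K w.1 β - s9v K z.1 β| + |s9v K w.2 β - s9v K z.2 β| := by
      calc r = |(-(s9v K w.1 β - s9v K z.1 β)) + (s9v K w.2 β - s9v K z.2 β)| := by
              rw [hr]; congr 1; rw [heq]; ring
        _ ≤ |(-(s9v K w.1 β - s9v K z.1 β))| + |s9v K w.2 β - s9v K z.2 β| := abs_add_le _ _
        _ = |s9v K w.1 β - s9v K z.1 β| + |s9v K w.2 β - s9v K z.2 β| := by rw [abs_neg]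
    linarith
  -- extract two distinct indices whose pairs lie in V
  have hfreq : ∀ N : ℕ, ∃ n ≥ N, q n ∈ V := by
    intro N
    have hset : q '' Set.Ici N ∈ Filter.map q Filter.atTop := by
      rw [Filter.mem_map]
      exact Filter.mem_of_superset (Filter.mem_atTop N) (fun n hn => Set.mem_image_of_mem q hn)
    have hne := (clusterPt_iff_nonempty.mp hcl) hVnhds hset
    obtain ⟨w, hwV, n, hn, rfl⟩ := hne
    exact ⟨n, hn, hwV⟩
  obtain ⟨n₁, -, hn₁⟩ := hfreq 0
  obtain ⟨n₂, hn₂ge, hn₂⟩ := hfreq (n₁ + 1)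
  have hne12 : (em n₁).1 ≠ (em n₂).1 := by
    intro h
    have : em n₁ = em n₂ := Subtype.ext h
    have : n₁ = n₂ := em.injective this
    omega
  exact Set.disjoint_left.mp (hdisj _ _ hne12) (hVsupp _ hn₁) (hVsupp _ hn₂)

end Stmt9D
section Stmt9Main

open Filter Topology Set Cardinal TopologicalSpace

theorem stmt9
    (Γ : Type) [TopologicalSpace Γ] [DiscreteTopology Γ]
    (hΓ : Cardinal.mk Γ = Cardinal.continuum)
    (K : Set (WeakSpace ℝ (ZeroAtInftyContinuousMap Γ ℝ)))
    (hK : IsCompact K) [CompactSpace K]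
    (hweight : topWeight K = Cardinal.continuum) :
    ∃ x y : Γ → K, (∀ a : Γ, x a ≠ y a) ∧
      ∀ σ : Γ → WeakDual ℝ C(K, ℝ),
        (σ = fun a => WeakDual.toStrongDual.symm
          ((1 / 2 : ℝ) • (ContinuousMap.evalCLM ℝ (x a) - ContinuousMap.evalCLM ℝ (y a)))) →
        ∃ h : ↥(Set.range σ ∪ Set.range (fun a => -σ a) ∪ {0}) ≃ₜ OnePoint Γ,
          ((h.symm OnePoint.infty :
            ↥(Set.range σ ∪ Set.range (fun a => -σ a) ∪ {0})) : WeakDual ℝ C(K, ℝ)) = 0 := by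
  obtain ⟨P, hne, hinj, hdisj⟩ := s9family K hΓ hweight
  refine ⟨fun a => (P a).1, fun a => (P a).2, fun a => hne a, ?_⟩
  intro σ hσ
  have hσval : ∀ a (f : C(K, ℝ)), σ a f = (1/2 : ℝ) * (f (P a).1 - f (P a).2) := by
    intro a f
    rw [hσ]
    rfl
  -- the witnessing coordinates
  have hβex : ∀ a, ∃ β, β ∈ s9supp K (P a) := by
    intro a
    by_contra hb
    push_neg at hb
    refine hne a (s9v_inj K fun β => ?_)
    by_contra hne'
    exact hb β hne'
  choose βa hβa using hβex
  set g : Γ → C(K, ℝ) := fun a => s9coord K (βa a) with hg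
  have hgval : ∀ a (w : K), g a w = s9v K w (βa a) := fun a w => rfl
  have hσg : ∀ a, σ a (g a) ≠ 0 := by
    intro a
    rw [hσval, hgval, hgval]
    have : s9v K (P a).1 (βa a) ≠ s9v K (P a).2 (βa a) := hβa a
    intro hc
    apply this
    rcases mul_eq_zero.mp hc with h | h
    · norm_num at h
    · linarith [sub_eq_zero.mp h]
  have hσg' : ∀ a b, a ≠ b → σ b (g a) = 0 := by
    intro a b hab
    rw [hσval, hgval, hgval]
    have : βa a ∉ s9supp K (P b) :=
      Set.disjoint_left.mp (hdisj a b hab) (hβa a)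
    simp only [s9supp, Set.mem_setOf_eq, not_not] at this
    rw [this, sub_self, mul_zero]
  -- finiteness of large evaluations
  have hfin : ∀ (f : C(K, ℝ)) {ε : ℝ}, 0 < ε → {b : Γ | ε ≤ |σ b f|}.Finite := by
    intro f ε hε
    refine Set.Finite.subset (s9main K hinj hdisj f (δ := 2 * ε) (by linarith)) ?_
    intro b hb
    simp only [Set.mem_setOf_eq] at hb ⊢
    rw [hσval, abs_mul, abs_of_pos (by norm_num : (0:ℝ) < 1/2)] at hb
    linarith
  -- a bijection Γ ≃ Γ ⊕ Γ
  have hcard : #Γ = #(Γ ⊕ Γ) := by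
    have hs : #(Γ ⊕ Γ) = #Γ + #Γ := by
      rw [Cardinal.mk_sum]
      simp
    rw [hs, hΓ, Cardinal.add_eq_self Cardinal.aleph0_lt_continuum.le]
  obtain ⟨e⟩ := Cardinal.eq.mp hcard
  set τ : Γ ⊕ Γ → WeakDual ℝ C(K, ℝ) := Sum.elim σ (fun b => -σ b) with hτ
  set Φ : OnePoint Γ → WeakDual ℝ C(K, ℝ) := fun o => o.elim 0 (fun a => τ (e a)) with hΦ
  have hΦsome : ∀ a : Γ, Φ a = τ (e a) := fun a => rfl
  have hΦinf : Φ OnePoint.infty = 0 := rfl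
  have hτne : ∀ s, τ s ≠ 0 := by
    rintro (b | b) hc
    · apply hσg b
      have hb : σ b = 0 := hc
      rw [hb]
      rfl
    · apply hσg b
      have hb : -σ b = 0 := hc
      have hb2 : σ b = 0 := by
        have := congrArg Neg.neg hb
        simpa using this
      rw [hb2]
      rfl
  have hmem : ∀ o, Φ o ∈ Set.range σ ∪ Set.range (fun a => -σ a) ∪ {0} := by
    rintro (_ | a)
    · exact Set.mem_union_right _ rfl
    · change τ (e a) ∈ _
      rcases e a with b | b
      · exact Set.mem_union_left _ (Set.mem_union_left _ ⟨b, rfl⟩)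
      · exact Set.mem_union_left _ (Set.mem_union_right _ ⟨b, rfl⟩)
  have hτinj : Function.Injective τ := by
    rintro (b₁ | b₁) (b₂ | b₂) h
    · by_cases hbb : b₁ = b₂
      · rw [hbb]
      · exfalso
        have h1 := DFunLike.congr_fun (show σ b₁ = σ b₂ from h) (g b₁)
        rw [hσg' b₁ b₂ (fun hq => hbb hq)] at h1
        exact hσg b₁ h1
    · exfalso
      have h' : σ b₁ = -σ b₂ := h
      by_cases hbb : b₁ = b₂
      · subst hbb
        have h2 : σ b₁ (g b₁) = -(σ b₁ (g b₁)) := DFunLike.congr_fun h' (g b₁)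
        have h3 : σ b₁ (g b₁) = 0 := by linarith
        exact hσg b₁ h3
      · have h2 : σ b₁ (g b₁) = -(σ b₂ (g b₁)) := DFunLike.congr_fun h' (g b₁)
        rw [hσg' b₁ b₂ (fun hq => hbb hq)] at h2
        simp only [neg_zero] at h2
        exact hσg b₁ h2
    · exfalso
      have h' : -σ b₁ = σ b₂ := h
      by_cases hbb : b₂ = b₁
      · subst hbb
        have h2 : -(σ b₂ (g b₂)) = σ b₂ (g b₂) := DFunLike.congr_fun h' (g b₂)
        have h3 : σ b₂ (g b₂) = 0 := by linarith
        exact hσg b₂ h3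
      · have h2 : -(σ b₁ (g b₂)) = σ b₂ (g b₂) := DFunLike.congr_fun h' (g b₂)
        rw [hσg' b₂ b₁ hbb] at h2
        simp only [neg_zero] at h2
        exact hσg b₂ h2.symm
    · by_cases hbb : b₁ = b₂
      · rw [hbb]
      · exfalso
        have h'' : σ b₁ = σ b₂ := by
          have := congrArg Neg.neg (show -σ b₁ = -σ b₂ from h)
          simpa using this
        have h1 := DFunLike.congr_fun h'' (g b₁)
        rw [hσg' b₁ b₂ (fun hq => hbb hq)] at h1
        exact hσg b₁ h1
  have hΦinj : Function.Injective Φ := by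
    rintro (_ | a₁) (_ | a₂) h
    · rfl
    · exact absurd (show τ (e a₂) = 0 from h.symm) (hτne _)
    · exact absurd (show τ (e a₁) = 0 from h) (hτne _)
    · have : e a₁ = e a₂ := hτinj h
      rw [e.injective this]
  have hΦsurj : ∀ z ∈ Set.range σ ∪ Set.range (fun a => -σ a) ∪ {0}, ∃ o, Φ o = z := by
    rintro z ((⟨a, rfl⟩ | ⟨a, rfl⟩) | rfl)
    · refine ⟨OnePoint.some (e.symm (Sum.inl a)), ?_⟩
      rw [hΦsome, e.apply_symm_apply]
      rfl
    · refine ⟨OnePoint.some (e.symm (Sum.inr a)), ?_⟩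
      rw [hΦsome, e.apply_symm_apply]
      rfl
    · exact ⟨OnePoint.infty, rfl⟩
  -- continuity of Φ
  have hΦcont : Continuous Φ := by
    rw [OnePoint.continuous_iff_from_discrete]
    rw [hΦinf]
    rw [tendsto_iff_forall_eval_tendsto_topDualPairing]
    intro f
    change Tendsto _ cofinite (𝓝 ((0 : C(K, ℝ) →L[ℝ] ℝ) f))
    have hzero : ((0 : C(K, ℝ) →L[ℝ] ℝ)) f = 0 := rfl
    rw [Metric.tendsto_nhds]
    intro ε hε
    rw [Filter.eventually_cofinite]
    have hsub : {a : Γ | ¬ dist ((topDualPairing ℝ C(K, ℝ)) (Φ a) f)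
        ((0 : C(K, ℝ) →L[ℝ] ℝ) f) < ε}
        ⊆ e ⁻¹' (Sum.inl '' {b | ε ≤ |σ b f|} ∪ Sum.inr '' {b | ε ≤ |σ b f|}) := by
      intro a ha
      simp only [Set.mem_setOf_eq, hzero, Real.dist_eq, sub_zero, not_lt] at ha
      have hval : (topDualPairing ℝ C(K, ℝ)) (Φ (OnePoint.some a)) f = τ (e a) f := rfl
      rw [hval] at ha
      rcases hs : e a with b | b
      · rw [hs] at ha
        exact Set.mem_preimage.mpr (Set.mem_union_left _ ⟨b, ha, hs.symm⟩)
      · rw [hs] at ha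
        have habs : |(Sum.elim σ (fun b => -σ b) (Sum.inr b)) f| = |σ b f| := by
          rw [show ((Sum.elim σ (fun b => -σ b) (Sum.inr b)) f) = -(σ b f) from rfl, abs_neg]
        rw [habs] at ha
        exact Set.mem_preimage.mpr (Set.mem_union_right _ ⟨b, ha, hs.symm⟩)
    refine Set.Finite.subset (Set.Finite.preimage e.injective.injOn ?_) hsub
    exact ((hfin f hε).image _).union ((hfin f hε).image _)
  -- build the homeomorphism
  set Φ' : OnePoint Γ → ↥(Set.range σ ∪ Set.range (fun a => -σ a) ∪ {0}) :=
    fun o => ⟨Φ o, hmem o⟩ with hΦ'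
  have hΦ'bij : Function.Bijective Φ' := by
    constructor
    · intro o₁ o₂ h
      exact hΦinj (congrArg Subtype.val h)
    · rintro ⟨z, hz⟩
      obtain ⟨o, ho⟩ := hΦsurj z hz
      exact ⟨o, Subtype.ext ho⟩
  have hΦ'cont : Continuous Φ' := hΦcont.subtype_mk _
  refine ⟨(Continuous.homeoOfEquivCompactToT2
    (f := Equiv.ofBijective Φ' hΦ'bij) hΦ'cont).symm, ?_⟩
  rw [Homeomorph.symm_symm]
  rfl

end Stmt9Main
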